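/- arXiv:1511.06196 — 6 statements merged into one kernel-verified Lean document; each statement's English description precedes it below -/
import Mathlib

section
/- Let (X, F, π) be a probability space, g : X → ℝ a nonnegative measurable function with π(g) > 0 and π(g²) < ∞, and define ρ = π(g²)/π(g)². Let u¹,…,u^N be i.i.d. samples from π and define the self-normalized importance sampling estimator μ^N(φ) = (Σₙ φ(uⁿ)g(uⁿ)) / (Σₘ g(uᵐ)). Then for every measurable φ with |φ| ≤ 1, the mean squared error satisfies E[(μ^N(φ) − μ(φ))²] ≤ 4ρ/N, where μ(φ) = π(φg)/π(g). -/
open MeasureTheory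

section Aux

variable {X : Type*} [MeasureSpace X] [IsProbabilityMeasure (volume : Measure X)]

lemma my_integrable_of_sq {h : X → ℝ} (hm : Measurable h)
    (h2 : Integrable (fun x => h x ^ 2)) : Integrable h := by
  refine Integrable.mono' (g := fun x => h x ^ 2 + 1)
    (by simpa using h2.add (integrable_const 1)) hm.aestronglyMeasurable
    (Filter.Eventually.of_forall fun x => ?_)
  show |h x| ≤ h x ^ 2 + 1
  nlinarith [sq_nonneg (|h x| - 1), abs_nonneg (h x), sq_abs (h x)]

lemma my_eval_diag {N : ℕ} (n : Fin N) {h : X → ℝ}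
    (h2 : Integrable (fun x => h x ^ 2)) :
    Integrable (fun u : Fin N → X => h (u n) ^ 2) ∧
      ∫ u : Fin N → X, h (u n) ^ 2 = ∫ x, h x ^ 2 := by
  classical
  have key : (fun u : Fin N → X => h (u n) ^ 2)
      = fun u => ∏ i, (fun i x => if i = n then h x ^ 2 else 1) i (u i) := by
    funext u
    simp [Finset.prod_ite_eq']
  constructor
  · rw [key]
    refine Integrable.fintype_prod (f := fun i x => if i = n then h x ^ 2 else 1) fun i => ?_
    show Integrable (fun x => if i = n then h x ^ 2 else 1) volume
    split_ifs
    exacts [h2, integrable_const 1]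
  · erw [key,
      MeasureTheory.integral_fintype_prod_eq_prod (ι := Fin N)
        (fun i (x : X) => if i = n then h x ^ 2 else (1 : ℝ))]
    have : ∀ i : Fin N, (∫ x, (if i = n then h x ^ 2 else 1)) =
        if i = n then ∫ x, h x ^ 2 else 1 := by
      intro i; split_ifs <;> simp
    simp only [this, Finset.prod_ite_eq']
    simp

lemma my_eval_pair {N : ℕ} {n m : Fin N} (hnm : n ≠ m) {h : X → ℝ}
    (hm : Measurable h) (h2 : Integrable (fun x => h x ^ 2)) :
    Integrable (fun u : Fin N → X => h (u n) * h (u m)) ∧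
      ∫ u : Fin N → X, h (u n) * h (u m) = (∫ x, h x) ^ 2 := by
  classical
  have hint : Integrable h := my_integrable_of_sq hm h2
  have key : (fun u : Fin N → X => h (u n) * h (u m))
      = fun u => ∏ i, (fun i x => if i = n then h x else if i = m then h x else 1) i (u i) := by
    funext u
    rw [← Finset.prod_subset (Finset.subset_univ ({n, m} : Finset (Fin N)))
      (fun i _ hi => by
        simp only [Finset.mem_insert, Finset.mem_singleton, not_or] at hi
        simp [hi.1, hi.2])]
    rw [Finset.prod_pair hnm]
    simp [hnm, Ne.symm hnm]
  constructor
  · rw [key]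
    refine Integrable.fintype_prod
      (f := fun i x => if i = n then h x else if i = m then h x else 1) fun i => ?_
    show Integrable (fun x => if i = n then h x else if i = m then h x else 1) volume
    split_ifs
    exacts [hint, hint, integrable_const 1]
  · erw [key,
      MeasureTheory.integral_fintype_prod_eq_prod (ι := Fin N)
        (fun i (x : X) => if i = n then h x else if i = m then h x else (1 : ℝ))]
    have : ∀ i : Fin N, (∫ x, (if i = n then h x else if i = m then h x else 1))
        = if i = n then ∫ x, h x else if i = m then ∫ x, h x else 1 := by
      intro i; split_ifs <;> simp
    rw [Finset.prod_congr rfl fun i _ => this i]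
    rw [← Finset.prod_subset (Finset.subset_univ ({n, m} : Finset (Fin N)))
      (fun i _ hi => by
        simp only [Finset.mem_insert, Finset.mem_singleton, not_or] at hi
        simp [hi.1, hi.2])]
    rw [Finset.prod_pair hnm]
    simp [hnm, Ne.symm hnm, sq]

lemma my_sum_sq {N : ℕ} {h : X → ℝ} (hm : Measurable h)
    (h2 : Integrable (fun x => h x ^ 2)) :
    Integrable (fun u : Fin N → X => (∑ n, h (u n)) ^ 2) ∧
      ∫ u : Fin N → X, (∑ n, h (u n)) ^ 2
        = N * (∫ x, h x ^ 2) + ((N : ℝ) ^ 2 - N) * (∫ x, h x) ^ 2 := by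
  classical
  have expand : (fun u : Fin N → X => (∑ n, h (u n)) ^ 2)
      = fun u => ∑ n, ∑ m, h (u n) * h (u m) := by
    funext u; rw [sq, Finset.sum_mul_sum]
  have hterm : ∀ n m : Fin N, Integrable (fun u : Fin N → X => h (u n) * h (u m)) := by
    intro n m
    by_cases hnm : n = m
    · subst hnm
      have := (my_eval_diag n h2).1
      simpa [sq] using this
    · exact (my_eval_pair hnm hm h2).1
  have hti : ∀ n m : Fin N, ∫ u : Fin N → X, h (u n) * h (u m)
      = if n = m then ∫ x, h x ^ 2 else (∫ x, h x) ^ 2 := by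
    intro n m
    by_cases hnm : n = m
    · subst hnm
      simp only [if_pos rfl]
      have := (my_eval_diag n h2).2
      simpa [sq] using this
    · rw [if_neg hnm]; exact (my_eval_pair hnm hm h2).2
  constructor
  · rw [expand]
    exact integrable_finset_sum _ fun n _ => integrable_finset_sum _ fun m _ => hterm n m
  · rw [expand, integral_finset_sum _ fun n _ => integrable_finset_sum _ fun m _ => hterm n m]
    have h1 : ∀ n : Fin N, ∫ u : Fin N → X, ∑ m, h (u n) * h (u m)
        = ∑ m, ∫ u : Fin N → X, h (u n) * h (u m) := fun n =>
      integral_finset_sum _ fun m _ => hterm n m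
    simp only [h1, hti]
    set A := ∫ x, h x ^ 2
    set B := (∫ x, h x) ^ 2
    have h2' : ∀ n : Fin N, (∑ m, if n = m then A else B) = (A - B) + N * B := by
      intro n
      have e : ∀ m : Fin N, (if n = m then A else B) = (if n = m then A - B else 0) + B := by
        intro m; split_ifs <;> ring
      rw [Finset.sum_congr rfl fun m _ => e m, Finset.sum_add_distrib, Finset.sum_ite_eq,
        Finset.sum_const, Finset.card_univ, Fintype.card_fin, nsmul_eq_mul]
      simp
    rw [Finset.sum_congr rfl fun n _ => h2' n, Finset.sum_const, Finset.card_univ,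
      Fintype.card_fin, nsmul_eq_mul]
    ring

end Aux

section Aux2
variable {X : Type*} [MeasureSpace X] [IsProbabilityMeasure (volume : Measure X)]

lemma my_mean_sq {N : ℕ} (hN : 0 < N) {f : X → ℝ} (hm : Measurable f)
    (h2 : Integrable (fun x => f x ^ 2)) {c : ℝ} (hc : 0 < c) :
    Integrable (fun u : Fin N → X => ((∑ n, f (u n)) / (N * c) - (∫ x, f x) / c) ^ 2) ∧
      ∫ u : Fin N → X, ((∑ n, f (u n)) / (N * c) - (∫ x, f x) / c) ^ 2
        ≤ (∫ x, f x ^ 2) / (N * c ^ 2) := by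
  have hfi : Integrable f := my_integrable_of_sq hm h2
  set m : ℝ := ∫ x, f x with hm'
  set h : X → ℝ := fun x => f x - m with hh
  have hhm : Measurable h := hm.sub measurable_const
  have hsq : (fun x => h x ^ 2) = fun x => f x ^ 2 - (2 * m) * f x + m ^ 2 := by
    funext x; simp only [hh]; ring
  have hh2 : Integrable (fun x => h x ^ 2) := by
    rw [hsq]; exact (h2.sub (hfi.const_mul (2 * m))).add (integrable_const _)
  have hh0 : ∫ x, h x = 0 := by
    simp only [hh]
    rw [integral_sub hfi (integrable_const m), integral_const]
    simp [hm']
  have i1 : Integrable (fun x => f x ^ 2 - 2 * m * f x) := by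
    exact h2.sub (hfi.const_mul (2 * m))
  have hh2v : ∫ x, h x ^ 2 = (∫ x, f x ^ 2) - m ^ 2 := by
    rw [hsq, integral_add i1 (integrable_const _),
      integral_sub h2 (hfi.const_mul (2 * m)), integral_const_mul, integral_const]
    simp [← hm']; ring
  have hNc : (N : ℝ) * c ≠ 0 := by positivity
  have key : ∀ u : Fin N → X, ((∑ n, f (u n)) / (N * c) - m / c)
      = (∑ n, h (u n)) / (N * c) := by
    intro u
    have : ∑ n, h (u n) = (∑ n, f (u n)) - N * m := by
      simp only [hh, Finset.sum_sub_distrib, Finset.sum_const, Finset.card_univ,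
        Fintype.card_fin, nsmul_eq_mul]
    rw [this]
    field_simp
  have key2 : (fun u : Fin N → X => ((∑ n, f (u n)) / (N * c) - m / c) ^ 2)
      = fun u => (((N : ℝ) * c) ^ 2)⁻¹ * (∑ n, h (u n)) ^ 2 := by
    funext u; rw [key u]; rw [div_pow]; ring
  have hss := my_sum_sq (N := N) hhm hh2
  constructor
  · rw [key2]; exact hss.1.const_mul _
  · rw [key2, integral_const_mul, hss.2, hh0]
    have hm2 : (∫ x, h x ^ 2) ≤ ∫ x, f x ^ 2 := by rw [hh2v]; nlinarith [sq_nonneg m]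
    have hpos : (0:ℝ) < (N : ℝ) * c ^ 2 := by positivity
    rw [show ((N:ℝ)^2 - N) * (0:ℝ)^2 = 0 by ring, add_zero]
    rw [show (((N:ℝ) * c) ^ 2)⁻¹ * ((N:ℝ) * ∫ x, h x ^ 2) = (∫ x, h x ^ 2) / ((N:ℝ) * c ^ 2) by
      field_simp]
    gcongr
end Aux2

/-- Non-asymptotic MSE bound for self-normalized importance sampling over
bounded test functions: `E[(μ^N(φ) - μ(φ))²] ≤ 4ρ/N` with `ρ = π(g²)/π(g)²`. -/
theorem stmt_0 {X : Type*} [MeasurableSpace X] (π : Measure X) [IsProbabilityMeasure π]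
    (g : X → ℝ) (hgm : Measurable g) (hg0 : ∀ x, 0 ≤ g x)
    (hgpos : 0 < ∫ x, g x ∂π)
    (hg2 : Integrable (fun x => (g x) ^ 2) π)
    (N : ℕ) (hN : 0 < N)
    (φ : X → ℝ) (hφm : Measurable φ) (hφ : ∀ x, |φ x| ≤ 1) :
    ∫ u : Fin N → X,
        ((∑ n, φ (u n) * g (u n)) / (∑ m, g (u m))
          - (∫ x, φ x * g x ∂π) / (∫ x, g x ∂π)) ^ 2
      ∂(Measure.pi fun _ => π)
      ≤ 4 * ((∫ x, (g x) ^ 2 ∂π) / (∫ x, g x ∂π) ^ 2) / N := by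
  letI : MeasureSpace X := { toMeasurableSpace := ‹_›, volume := π }
  haveI : IsProbabilityMeasure (volume : Measure X) := ‹IsProbabilityMeasure π›
  have hvol : (Measure.pi fun _ : Fin N => π) = (volume : Measure (Fin N → X)) := rfl
  have hπ : π = (volume : Measure X) := rfl
  rw [hvol, hπ]
  -- notation
  have hgbar_pos : (0:ℝ) < ∫ x, g x := hgpos
  have hgbar_ne : (∫ x, g x) ≠ 0 := ne_of_gt hgbar_pos
  have hNne : ((N : ℝ)) ≠ 0 := Nat.cast_ne_zero.mpr hN.ne'
  have hg2' : Integrable (fun x => g x ^ 2) := hg2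
  have hf1m : Measurable (fun x => φ x * g x) := hφm.mul hgm
  have hφsq : ∀ x, (φ x * g x) ^ 2 ≤ g x ^ 2 := by
    intro x
    have h1 : φ x ^ 2 ≤ 1 := by nlinarith [sq_abs (φ x), hφ x, abs_nonneg (φ x)]
    nlinarith [sq_nonneg (g x), mul_nonneg (sub_nonneg.2 h1) (sq_nonneg (g x))]
  have hf12 : Integrable (fun x => (φ x * g x) ^ 2) := by
    refine Integrable.mono' hg2' ((hf1m.pow_const 2).aestronglyMeasurable)
      (Filter.Eventually.of_forall fun x => ?_)
    rw [Real.norm_eq_abs, abs_of_nonneg (sq_nonneg _)]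
    exact hφsq x
  have hA := my_mean_sq (N := N) hN hf1m hf12 hgbar_pos
  have hB := my_mean_sq (N := N) hN hgm hg2' hgbar_pos
  -- pointwise bound
  have hpt : ∀ u : Fin N → X,
      ((∑ n, φ (u n) * g (u n)) / (∑ m, g (u m))
          - (∫ x, φ x * g x) / (∫ x, g x)) ^ 2
      ≤ 2 * ((∑ n, φ (u n) * g (u n)) / (N * ∫ x, g x)
              - (∫ x, φ x * g x) / (∫ x, g x)) ^ 2
        + 2 * ((∑ n, g (u n)) / (N * ∫ x, g x) - (∫ x, g x) / (∫ x, g x)) ^ 2 := by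
    intro u
    rw [div_self hgbar_ne]
    have hT1 : (0:ℝ) ≤ ∑ m, g (u m) := Finset.sum_nonneg fun i _ => hg0 _
    have habs : |∑ n, φ (u n) * g (u n)| ≤ ∑ m, g (u m) := by
      calc |∑ n, φ (u n) * g (u n)| ≤ ∑ n, |φ (u n) * g (u n)| :=
            Finset.abs_sum_le_sum_abs _ _
        _ ≤ ∑ m, g (u m) := Finset.sum_le_sum fun i _ => by
            rw [abs_mul, abs_of_nonneg (hg0 _)]
            nlinarith [hφ (u i), hg0 (u i), abs_nonneg (φ (u i))]
    rcases hT1.eq_or_lt with h0 | h0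
    · have hTφ0 : (∑ n, φ (u n) * g (u n)) = 0 :=
        abs_eq_zero.mp (le_antisymm (h0 ▸ habs) (abs_nonneg _))
      rw [← h0, hTφ0]
      simp only [zero_div, div_zero]
      nlinarith [sq_nonneg ((∫ x, φ x * g x) / (∫ x, g x))]
    · have hT1ne : (∑ m, g (u m)) ≠ 0 := ne_of_gt h0
      set a : ℝ := (∑ n, φ (u n) * g (u n)) / (N * ∫ x, g x)
          - (∫ x, φ x * g x) / (∫ x, g x) with ha
      set b : ℝ := (∑ n, g (u n)) / (N * ∫ x, g x) - 1 with hb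
      set r : ℝ := (∑ n, φ (u n) * g (u n)) / (∑ m, g (u m)) with hr
      have hid : (∑ n, φ (u n) * g (u n)) / (∑ m, g (u m))
          - (∫ x, φ x * g x) / (∫ x, g x) = a - r * b := by
        rw [ha, hb, hr]
        field_simp
        ring
      have hrabs : |r| ≤ 1 := by
        rw [hr, abs_div, abs_of_pos h0]
        exact div_le_one_of_le₀ habs hT1
      have hr2 : r ^ 2 ≤ 1 := by
        have := abs_le.mp hrabs
        nlinarith
      rw [hid]
      nlinarith [sq_nonneg (a + r * b), mul_nonneg (sub_nonneg.2 hr2) (sq_nonneg b)]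
  -- integrate
  have hRint : Integrable (fun u : Fin N → X =>
      2 * ((∑ n, φ (u n) * g (u n)) / (N * ∫ x, g x)
            - (∫ x, φ x * g x) / (∫ x, g x)) ^ 2
      + 2 * ((∑ n, g (u n)) / (N * ∫ x, g x) - (∫ x, g x) / (∫ x, g x)) ^ 2) := by
    exact (hA.1.const_mul 2).add (hB.1.const_mul 2)
  calc ∫ u : Fin N → X, ((∑ n, φ (u n) * g (u n)) / (∑ m, g (u m))
          - (∫ x, φ x * g x) / (∫ x, g x)) ^ 2
      ≤ ∫ u : Fin N → X,
          (2 * ((∑ n, φ (u n) * g (u n)) / (N * ∫ x, g x)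
              - (∫ x, φ x * g x) / (∫ x, g x)) ^ 2
          + 2 * ((∑ n, g (u n)) / (N * ∫ x, g x) - (∫ x, g x) / (∫ x, g x)) ^ 2) :=
        integral_mono_of_nonneg (Filter.Eventually.of_forall fun u => sq_nonneg _)
          hRint (Filter.Eventually.of_forall hpt)
    _ = 2 * (∫ u : Fin N → X, ((∑ n, φ (u n) * g (u n)) / (N * ∫ x, g x)
              - (∫ x, φ x * g x) / (∫ x, g x)) ^ 2)
        + 2 * (∫ u : Fin N → X,
              ((∑ n, g (u n)) / (N * ∫ x, g x) - (∫ x, g x) / (∫ x, g x)) ^ 2) := by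
        rw [integral_add (hA.1.const_mul 2) (hB.1.const_mul 2), integral_const_mul,
          integral_const_mul]
    _ ≤ 2 * ((∫ x, (φ x * g x) ^ 2) / (N * (∫ x, g x) ^ 2))
        + 2 * ((∫ x, g x ^ 2) / (N * (∫ x, g x) ^ 2)) := by
        exact add_le_add (mul_le_mul_of_nonneg_left hA.2 (by norm_num))
          (mul_le_mul_of_nonneg_left hB.2 (by norm_num))
    _ ≤ 2 * ((∫ x, g x ^ 2) / (N * (∫ x, g x) ^ 2))
        + 2 * ((∫ x, g x ^ 2) / (N * (∫ x, g x) ^ 2)) := by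
        have : (∫ x, (φ x * g x) ^ 2) ≤ ∫ x, g x ^ 2 :=
          integral_mono hf12 hg2' hφsq
        gcongr
    _ = 4 * ((∫ x, g x ^ 2) / (∫ x, g x) ^ 2) / N := by
        field_simp
        ring
end

section
/- In the setting of self-normalized importance sampling with |φ| ≤ 1, π(g) > 0 and π(g²) < ∞, the bias satisfies |E[μ^N(φ) − μ(φ)]| ≤ 12ρ/N, where ρ = π(g²)/π(g)². -/
open MeasureTheory

section Helpers

variable {X : Type*} [MeasurableSpace X]


lemma helper_eval (π : Measure X) [IsProbabilityMeasure π] {N : ℕ} (i : Fin N) :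
    MeasurePreserving (fun u : Fin N → X => u i) (Measure.pi fun _ => π) π := by
  refine ⟨measurable_pi_apply i, ?_⟩
  ext s hs
  rw [Measure.map_apply (measurable_pi_apply i) hs]
  have hset : (fun u : Fin N → X => u i) ⁻¹' s
      = Set.pi Set.univ (Function.update (fun _ => Set.univ) i s) := by
    ext u
    simp [Function.update_apply]
  rw [hset, Measure.pi_pi]
  rw [Finset.prod_eq_single_of_mem i (Finset.mem_univ i)
    (fun j _ hj => by simp [Function.update_apply, hj])]
  simp

lemma helper_indep (π : Measure X) [IsProbabilityMeasure π] {N : ℕ} {i j : Fin N} (hij : i ≠ j) :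
    ProbabilityTheory.IndepFun (fun u : Fin N → X => u i) (fun u : Fin N → X => u j)
      (Measure.pi fun _ => π) := by
  rw [ProbabilityTheory.indepFun_iff_measure_inter_preimage_eq_mul]
  intro s t hs ht
  have hpre : (fun u : Fin N → X => u i) ⁻¹' s ∩ (fun u : Fin N → X => u j) ⁻¹' t
      = Set.pi Set.univ (Function.update (Function.update (fun _ => Set.univ) i s) j t) := by
    ext u
    simp only [Set.mem_inter_iff, Set.mem_preimage, Set.mem_pi, Set.mem_univ, forall_true_left,
      Function.update_apply]
    constructor
    · rintro ⟨h1, h2⟩ k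
      split_ifs with h h'
      · subst h; exact h2
      · subst h'; exact h1
      · trivial
    · intro H
      refine ⟨?_, ?_⟩
      · have := H i; simpa [hij] using this
      · have := H j; simpa using this
  have h1 : Measure.pi (fun _ : Fin N => π) ((fun u : Fin N → X => u i) ⁻¹' s) = π s := by
    rw [← Measure.map_apply (measurable_pi_apply i) hs, (helper_eval π i).map_eq]
  have h2 : Measure.pi (fun _ : Fin N => π) ((fun u : Fin N → X => u j) ⁻¹' t) = π t := by
    rw [← Measure.map_apply (measurable_pi_apply j) ht, (helper_eval π j).map_eq]
  rw [hpre, Measure.pi_pi, h1, h2]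
  have hfun : (fun k => π (Function.update (Function.update (fun _ => Set.univ) i s) j t k))
      = Function.update (Function.update (fun _ => (1 : ENNReal)) i (π s)) j (π t) := by
    funext k
    by_cases hk : k = j
    · subst hk; simp
    · by_cases hk' : k = i
      · subst hk'; simp [Function.update_apply, hk, hij]
      · simp [Function.update_apply, hk, hk']
  rw [hfun, Finset.prod_update_of_mem (Finset.mem_univ j),
    Finset.prod_eq_single_of_mem i (by simp [hij])
      (fun k _ hk => by simp [Function.update_apply, hk])]
  simp [mul_comm]



lemma integrable_eval (π : Measure X) [IsProbabilityMeasure π] {N : ℕ} (i : Fin N)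
    {f : X → ℝ} (hf : Integrable f π) :
    Integrable (fun u : Fin N → X => f (u i)) (Measure.pi fun _ => π) :=
  ((helper_eval π i).integrable_comp hf.1).2 hf

lemma integral_eval (π : Measure X) [IsProbabilityMeasure π] {N : ℕ} (i : Fin N)
    {f : X → ℝ} (hf : AEStronglyMeasurable f π) :
    ∫ u : Fin N → X, f (u i) ∂(Measure.pi fun _ => π) = ∫ x, f x ∂π := by
  have h := (helper_eval π i).map_eq
  rw [show (∫ u : Fin N → X, f (u i) ∂(Measure.pi fun _ => π))
      = ∫ u : Fin N → X, f ((fun v : Fin N → X => v i) u) ∂(Measure.pi fun _ => π) from rfl,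
    ← integral_map (measurable_pi_apply i).aemeasurable (by rw [h]; exact hf), h]

lemma sq_sum_integral (π : Measure X) [IsProbabilityMeasure π] (N : ℕ)
    {f : X → ℝ} (hfm : Measurable f) (hf1 : Integrable f π)
    (hf2 : Integrable (fun x => f x ^ 2) π) (hf0 : ∫ x, f x ∂π = 0) :
    Integrable (fun u : Fin N → X => (∑ n, f (u n)) ^ 2) (Measure.pi fun _ => π) ∧
    ∫ u : Fin N → X, (∑ n, f (u n)) ^ 2 ∂(Measure.pi fun _ => π) = N * ∫ x, f x ^ 2 ∂π := by
  set P : Measure (Fin N → X) := Measure.pi fun _ => π with hP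
  have hterm : ∀ n m : Fin N, Integrable (fun u : Fin N → X => f (u n) * f (u m)) P := by
    intro n m
    by_cases hnm : n = m
    · subst hnm
      have := integrable_eval π n hf2
      exact this.congr (Filter.Eventually.of_forall fun u => by ring)
    · have hind : ProbabilityTheory.IndepFun (fun u : Fin N → X => f (u n))
          (fun u : Fin N → X => f (u m)) P :=
        (helper_indep π hnm).comp hfm hfm
      exact hind.integrable_mul (integrable_eval π n hf1) (integrable_eval π m hf1)
  have hterm_int : ∀ n m : Fin N,
      ∫ u : Fin N → X, f (u n) * f (u m) ∂P
        = if n = m then ∫ x, f x ^ 2 ∂π else 0 := by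
    intro n m
    by_cases hnm : n = m
    · subst hnm
      simp only [if_pos]
      rw [show (∫ u : Fin N → X, f (u n) * f (u n) ∂P)
          = ∫ u : Fin N → X, (fun x => f x ^ 2) (u n) ∂P from
        integral_congr_ae (Filter.Eventually.of_forall fun u => by simp [pow_two])]
      exact integral_eval π n hf2.1
    · rw [if_neg hnm]
      have hind : ProbabilityTheory.IndepFun (fun u : Fin N → X => f (u n))
          (fun u : Fin N → X => f (u m)) P :=
        (helper_indep π hnm).comp hfm hfm
      have := ProbabilityTheory.IndepFun.integral_fun_mul_eq_mul_integral hind (integrable_eval π n hf1).1 (integrable_eval π m hf1).1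
      have h1 : ∫ u : Fin N → X, f (u n) ∂P = 0 := by rw [integral_eval π n hf1.1, hf0]
      calc ∫ u : Fin N → X, f (u n) * f (u m) ∂P
          = (∫ u : Fin N → X, f (u n) ∂P) * ∫ u : Fin N → X, f (u m) ∂P := this
        _ = 0 := by rw [h1, zero_mul]
  have hsq : (fun u : Fin N → X => (∑ n, f (u n)) ^ 2)
      = fun u : Fin N → X => ∑ n : Fin N, ∑ m : Fin N, f (u n) * f (u m) := by
    funext u
    rw [pow_two, Finset.sum_mul_sum]
  have hint : Integrable (fun u : Fin N → X => (∑ n, f (u n)) ^ 2) P := by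
    rw [hsq]
    exact integrable_finset_sum _ fun n _ => integrable_finset_sum _ fun m _ => hterm n m
  refine ⟨hint, ?_⟩
  rw [hsq, integral_finset_sum _ fun n _ => integrable_finset_sum _ fun m _ => hterm n m]
  have : ∀ n : Fin N, ∫ u : Fin N → X, ∑ m : Fin N, f (u n) * f (u m) ∂P = ∫ x, f x ^ 2 ∂π := by
    intro n
    rw [integral_finset_sum _ fun m _ => hterm n m]
    simp [hterm_int n]
  simp only [this, Finset.sum_const, Finset.card_univ, Fintype.card_fin, nsmul_eq_mul]

end Helpers


lemma snis_pointwise {m c a s sφ nr : ℝ} (hnr : 0 < nr) (hm : 0 < m) (hc : |c| ≤ 1)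
    (hsnn : 0 ≤ s) (hsφ : |sφ| ≤ s) (ha : a = sφ - c * s) :
    |sφ / s - c - a / (nr * m)| ≤ (a ^ 2 / 2 + 10 * (s - nr * m) ^ 2) / (m ^ 2 * nr ^ 2) := by
  have haabs : |a| ≤ 2 * s := by
    rw [ha]
    calc |sφ - c * s| ≤ |sφ| + |c * s| := by
          rw [sub_eq_add_neg]; exact (abs_add_le _ _).trans_eq (by rw [abs_neg])
      _ ≤ s + 1 * s := add_le_add hsφ (by
          rw [abs_mul, abs_of_nonneg hsnn]
          exact mul_le_mul_of_nonneg_right hc hsnn)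
      _ = 2 * s := by ring
  have hnm : 0 < nr * m := mul_pos hnr hm
  rcases eq_or_lt_of_le hsnn with h0 | h0
  · have hsφ0 : sφ = 0 := by
      have h1 := hsφ; rw [← h0] at h1
      exact abs_eq_zero.mp (le_antisymm h1 (abs_nonneg _))
    have ha0 : a = 0 := by rw [ha, hsφ0, ← h0]; ring
    rw [hsφ0, ← h0, div_zero, ha0, zero_div, sub_zero, zero_sub, abs_neg]
    rw [le_div_iff₀ (by positivity)]
    nlinarith [hc, hnm, sq_nonneg (nr * m), abs_nonneg c]
  · have hform : sφ / s - c - a / (nr * m) = a * (nr * m - s) / (s * (nr * m)) := by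
      rw [ha]; field_simp
    have habs : |a * (nr * m - s) / (s * (nr * m))|
        = |a| * |nr * m - s| / (s * (nr * m)) := by
      rw [abs_div, abs_mul, abs_of_pos (show (0:ℝ) < s * (nr * m) by positivity)]
    rw [hform, habs]
    by_cases hhalf : s ≤ nr * m / 2
    · have h2 : |a| * |nr * m - s| / (s * (nr * m)) ≤ 2 := by
        rw [div_le_iff₀ (by positivity)]
        have h1 : |nr * m - s| = nr * m - s := abs_of_nonneg (by linarith)
        rw [h1]
        nlinarith [abs_nonneg a, hnm]
      refine h2.trans ?_
      rw [le_div_iff₀ (by positivity)]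
      have hge : (0:ℝ) ≤ nr * m - s - nr * m / 2 := by linarith
      have hge2 : (0:ℝ) ≤ nr * m - s + nr * m / 2 := by linarith
      nlinarith [sq_nonneg a, hnm, mul_nonneg hge hge2]
    · push_neg at hhalf
      have step1 : |a| * |nr * m - s| / (s * (nr * m))
          ≤ |a| * |nr * m - s| / (nr ^ 2 * m ^ 2 / 2) := by
        apply div_le_div_of_nonneg_left (by positivity) (by positivity)
        nlinarith [hnm]
      refine step1.trans ?_
      rw [div_le_div_iff₀ (by positivity) (by positivity)]
      have hK : (0:ℝ) < m ^ 2 * nr ^ 2 := by positivity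
      nlinarith [mul_nonneg (sq_nonneg (|a| - 2 * |nr * m - s|)) (le_of_lt hK),
        sq_abs a, sq_abs (nr * m - s), mul_nonneg (abs_nonneg a) (abs_nonneg (nr * m - s))]

/-- Non-asymptotic bias bound for self-normalized importance sampling over
bounded test functions: `|E[μ^N(φ) - μ(φ)]| ≤ 12ρ/N` with `ρ = π(g²)/π(g)²`. -/
theorem stmt_1 {X : Type*} [MeasurableSpace X] (π : Measure X) [IsProbabilityMeasure π]
    (g : X → ℝ) (hgm : Measurable g) (hg0 : ∀ x, 0 ≤ g x)
    (hgpos : 0 < ∫ x, g x ∂π)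
    (hg2 : Integrable (fun x => (g x) ^ 2) π)
    (N : ℕ) (hN : 0 < N)
    (φ : X → ℝ) (hφm : Measurable φ) (hφ : ∀ x, |φ x| ≤ 1) :
    |∫ u : Fin N → X,
        ((∑ n, φ (u n) * g (u n)) / (∑ m, g (u m))
          - (∫ x, φ x * g x ∂π) / (∫ x, g x ∂π))
      ∂(Measure.pi fun _ => π)|
      ≤ 12 * ((∫ x, (g x) ^ 2 ∂π) / (∫ x, g x ∂π) ^ 2) / N := by
  classical
  have hNR : (0:ℝ) < N := Nat.cast_pos.mpr hN
  have hNR' : (N:ℝ) ≠ 0 := ne_of_gt hNR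
  set P : Measure (Fin N → X) := Measure.pi fun _ : Fin N => π with hPdef
  haveI hPprob : IsProbabilityMeasure P := by rw [hPdef]; infer_instance
  set m := ∫ x, g x ∂π with hmdef
  set Ig2 := ∫ x, g x ^ 2 ∂π with hIg2def
  have hIg2nn : 0 ≤ Ig2 := integral_nonneg fun x => sq_nonneg _
  have hm0 : m ≠ 0 := ne_of_gt hgpos
  set mφ := ∫ x, φ x * g x ∂π with hmφdef
  set c := mφ / m with hcdef
  -- basic integrability over π
  have hg1 : Integrable g π := by
    refine Integrable.mono' ((integrable_const (1:ℝ)).add hg2) hgm.aestronglyMeasurable ?_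
    filter_upwards with x
    rw [Real.norm_eq_abs, abs_of_nonneg (hg0 x)]
    simp only [Pi.add_apply]
    nlinarith [hg0 x, sq_nonneg (g x - 1)]
  have hφg : Integrable (fun x => φ x * g x) π := by
    refine Integrable.mono' hg1 (hφm.mul hgm).aestronglyMeasurable ?_
    filter_upwards with x
    rw [Real.norm_eq_abs, abs_mul, abs_of_nonneg (hg0 x)]
    calc |φ x| * g x ≤ 1 * g x := mul_le_mul_of_nonneg_right (hφ x) (hg0 x)
      _ = g x := one_mul _
  have hcabs : |c| ≤ 1 := by
    rw [hcdef, abs_div, abs_of_pos hgpos, div_le_one hgpos]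
    calc |mφ| = ‖∫ x, φ x * g x ∂π‖ := by rw [Real.norm_eq_abs]
      _ ≤ ∫ x, ‖φ x * g x‖ ∂π := norm_integral_le_integral_norm _
      _ ≤ ∫ x, g x ∂π := by
          refine integral_mono hφg.norm hg1 fun x => ?_
          rw [Real.norm_eq_abs, abs_mul, abs_of_nonneg (hg0 x)]
          calc |φ x| * g x ≤ 1 * g x := mul_le_mul_of_nonneg_right (hφ x) (hg0 x)
            _ = g x := one_mul _
  -- centered functions
  set h : X → ℝ := fun x => (φ x - c) * g x with hhdef
  have hhm : Measurable h := (hφm.sub measurable_const).mul hgm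
  have hh1 : Integrable h π := by
    have heq : h = fun x => φ x * g x - c * g x := funext fun x => by simp [hhdef]; ring
    rw [heq]; exact hφg.sub (hg1.const_mul c)
  have hh0 : ∫ x, h x ∂π = 0 := by
    have heq : h = fun x => φ x * g x - c * g x := funext fun x => by simp [hhdef]; ring
    rw [heq, integral_sub hφg (hg1.const_mul c), integral_const_mul, ← hmφdef, ← hmdef, hcdef]
    field_simp
    ring
  have hh2 : Integrable (fun x => h x ^ 2) π := by
    refine Integrable.mono' (hg2.const_mul 4) ((hhm.pow_const 2).aestronglyMeasurable) ?_
    filter_upwards with x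
    rw [Real.norm_eq_abs, abs_of_nonneg (sq_nonneg _)]
    show ((φ x - c) * g x) ^ 2 ≤ 4 * g x ^ 2
    have h1 : |φ x - c| ≤ 2 := by
      calc |φ x - c| ≤ |φ x| + |c| := by
            rw [sub_eq_add_neg]; exact (abs_add_le _ _).trans_eq (by rw [abs_neg])
        _ ≤ 2 := by linarith [hφ x, hcabs]
    have h2 : (φ x - c) ^ 2 ≤ 4 := by nlinarith [abs_nonneg (φ x - c), sq_abs (φ x - c)]
    nlinarith [sq_nonneg (g x)]
  have hh2le : ∫ x, h x ^ 2 ∂π ≤ 4 * Ig2 := by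
    rw [show (4:ℝ) * Ig2 = ∫ x, 4 * g x ^ 2 ∂π by rw [integral_const_mul]]
    refine integral_mono hh2 (hg2.const_mul 4) fun x => ?_
    have h1 : |φ x - c| ≤ 2 := by
      calc |φ x - c| ≤ |φ x| + |c| := by
            rw [sub_eq_add_neg]; exact (abs_add_le _ _).trans_eq (by rw [abs_neg])
        _ ≤ 2 := by linarith [hφ x, hcabs]
    have h2 : (φ x - c) ^ 2 ≤ 4 := by nlinarith [abs_nonneg (φ x - c), sq_abs (φ x - c)]
    show ((φ x - c) * g x) ^ 2 ≤ 4 * g x ^ 2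
    nlinarith [sq_nonneg (g x)]
  set f2 : X → ℝ := fun x => g x - m with hf2def
  have hf2m : Measurable f2 := hgm.sub measurable_const
  have hf21 : Integrable f2 π := hg1.sub (integrable_const m)
  have hf20 : ∫ x, f2 x ∂π = 0 := by
    rw [hf2def, integral_sub hg1 (integrable_const m), integral_const]
    simp [← hmdef]
  have hsubint : Integrable (fun x => g x ^ 2 - (2*m) * g x) π :=
    (hg2.sub (hg1.const_mul (2*m)) : Integrable ((fun x => g x ^ 2) - fun x => (2*m) * g x) π)
  have hf22 : Integrable (fun x => f2 x ^ 2) π := by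
    have heq : (fun x => f2 x ^ 2) = fun x => (g x ^ 2 - (2*m) * g x) + m ^ 2 :=
      funext fun x => by simp [hf2def]; ring
    rw [heq]
    exact hsubint.add (integrable_const _)
  have hf22le : ∫ x, f2 x ^ 2 ∂π ≤ Ig2 := by
    have heq : (fun x => f2 x ^ 2) = fun x => (g x ^ 2 - (2*m) * g x) + m ^ 2 :=
      funext fun x => by simp [hf2def]; ring
    rw [heq, integral_add hsubint (integrable_const _),
      integral_sub hg2 (hg1.const_mul (2*m)), integral_const_mul, integral_const]
    simp only [measure_univ, probReal_univ, ENNReal.toReal_one, smul_eq_mul, one_mul, ← hmdef, ← hIg2def]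
    nlinarith [sq_nonneg m]
  -- sums over samples
  set S : (Fin N → X) → ℝ := fun u => ∑ n, g (u n) with hSdef
  set Sφ : (Fin N → X) → ℝ := fun u => ∑ n, φ (u n) * g (u n) with hSφdef
  set T1 : (Fin N → X) → ℝ := fun u => ∑ n, h (u n) with hT1def
  set T2 : (Fin N → X) → ℝ := fun u => ∑ n, f2 (u n) with hT2def
  obtain ⟨hT1int2, hT1val⟩ := sq_sum_integral π N hhm hh1 hh2 hh0
  obtain ⟨hT2int2, hT2val⟩ := sq_sum_integral π N hf2m hf21 hf22 hf20
  have hT1int : Integrable T1 P := integrable_finset_sum _ fun n _ => integrable_eval π n hh1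
  have hT1zero : ∫ u, T1 u ∂P = 0 := by
    rw [hT1def, integral_finset_sum _ fun n _ => integrable_eval π n hh1]
    simp [integral_eval π _ hh1.1, hh0]
  have hT2S : ∀ u, T2 u = S u - N * m := by
    intro u
    simp [hT2def, hf2def, hSdef, Finset.sum_sub_distrib, Finset.card_univ, mul_comm]
  have hT1eq : ∀ u, T1 u = Sφ u - c * S u := by
    intro u
    simp only [hT1def, hSφdef, hSdef, hhdef, Finset.mul_sum, ← Finset.sum_sub_distrib]
    exact Finset.sum_congr rfl fun n _ => by ring
  have hSnn : ∀ u, 0 ≤ S u := fun u => Finset.sum_nonneg fun n _ => hg0 _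
  have hSφle : ∀ u, |Sφ u| ≤ S u := by
    intro u
    refine (Finset.abs_sum_le_sum_abs _ _).trans (Finset.sum_le_sum fun n _ => ?_)
    rw [abs_mul, abs_of_nonneg (hg0 _)]
    calc |φ (u n)| * g (u n) ≤ 1 * g (u n) := mul_le_mul_of_nonneg_right (hφ _) (hg0 _)
      _ = g (u n) := one_mul _
  have hT1abs : ∀ u, |T1 u| ≤ 2 * S u := by
    intro u
    rw [hT1eq u]
    calc |Sφ u - c * S u| ≤ |Sφ u| + |c * S u| := by
          rw [sub_eq_add_neg]; exact (abs_add_le _ _).trans_eq (by rw [abs_neg])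
      _ ≤ S u + 1 * S u := by
          refine add_le_add (hSφle u) ?_
          rw [abs_mul, abs_of_nonneg (hSnn u)]
          exact mul_le_mul_of_nonneg_right hcabs (hSnn u)
      _ = 2 * S u := by ring
  -- the error function and remainder
  set e : (Fin N → X) → ℝ := fun u => Sφ u / S u - c with hedef
  set F : (Fin N → X) → ℝ := fun u => e u - T1 u / (N * m) with hFdef
  have hSm : Measurable S := Finset.measurable_sum _ fun n _ => hgm.comp (measurable_pi_apply n)
  have hSφm : Measurable Sφ :=
    Finset.measurable_sum _ fun n _ => (hφm.comp (measurable_pi_apply n)).mul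
      (hgm.comp (measurable_pi_apply n))
  have hem : Measurable e := (hSφm.div hSm).sub measurable_const
  have heabs : ∀ u, |e u| ≤ 2 := by
    intro u
    have h1 : |Sφ u / S u| ≤ 1 := by
      rcases eq_or_lt_of_le (hSnn u) with h0 | h0
      · rw [← h0, div_zero, abs_zero]; norm_num
      · rw [abs_div, abs_of_pos h0, div_le_one h0]; exact hSφle u
    show |Sφ u / S u - c| ≤ 2
    calc |Sφ u / S u - c| ≤ |Sφ u / S u| + |c| := by
          rw [sub_eq_add_neg]; exact (abs_add_le _ _).trans_eq (by rw [abs_neg])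
      _ ≤ 2 := by linarith [hcabs]
  have heint : Integrable e P := by
    refine Integrable.mono' (integrable_const (2:ℝ)) hem.aestronglyMeasurable ?_
    filter_upwards with u
    rw [Real.norm_eq_abs]; exact heabs u
  have hFint : Integrable F P := heint.sub (hT1int.div_const _)
  -- pointwise bound on the remainder
  have hRHSrepr : ∀ u, (1/m^2) * ((T1 u / N)^2/2 + 10 * (T2 u / N)^2)
      = ((T1 u)^2/2 + 10 * (T2 u)^2) / (m^2 * N^2) := by
    intro u; field_simp
  have hFbound : ∀ u, |F u| ≤ (1/m^2) * ((T1 u / N)^2/2 + 10 * (T2 u / N)^2) := by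
    intro u
    rw [hRHSrepr u, hT2S u]
    show |Sφ u / S u - c - T1 u / (↑N * m)| ≤ _
    exact snis_pointwise hNR hgpos hcabs (hSnn u) (hSφle u) (hT1eq u)
  -- integral of the quadratic bound
  set G : (Fin N → X) → ℝ := fun u => (1/m^2) * ((T1 u / N)^2/2 + 10 * (T2 u / N)^2) with hGdef
  have hGrepr : G = fun u => (1/(2*m^2*N^2)) * (T1 u)^2 + (10/(m^2*N^2)) * (T2 u)^2 := by
    funext u
    show (1/m^2) * ((T1 u / ↑N)^2/2 + 10 * (T2 u / ↑N)^2) = _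
    rw [hRHSrepr u]
    field_simp
  have hGint : Integrable G P := by
    rw [hGrepr]
    exact (hT1int2.const_mul _).add (hT2int2.const_mul _)
  have hGval : ∫ u, G u ∂P ≤ 12 * (Ig2 / m^2) / N := by
    have : ∫ u, G u ∂P = (1/(2*m^2*N^2)) * (N * ∫ x, h x ^ 2 ∂π)
        + (10/(m^2*N^2)) * (N * ∫ x, f2 x ^ 2 ∂π) := by
      rw [hGrepr, integral_add (hT1int2.const_mul _) (hT2int2.const_mul _),
        integral_const_mul, integral_const_mul, hT1val, hT2val]
    rw [this]
    have hb1 : (1/(2*m^2*N^2)) * (N * ∫ x, h x ^ 2 ∂π) ≤ (1/(2*m^2*N^2)) * (N * (4 * Ig2)) := by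
      refine mul_le_mul_of_nonneg_left ?_ (by positivity)
      exact mul_le_mul_of_nonneg_left hh2le (by positivity)
    have hb2 : (10/(m^2*N^2)) * (N * ∫ x, f2 x ^ 2 ∂π) ≤ (10/(m^2*N^2)) * (N * Ig2) := by
      refine mul_le_mul_of_nonneg_left ?_ (by positivity)
      exact mul_le_mul_of_nonneg_left hf22le (by positivity)
    have heq : (1/(2*m^2*N^2)) * (N * (4 * Ig2)) + (10/(m^2*N^2)) * (N * Ig2)
        = 12 * (Ig2 / m^2) / N := by
      field_simp
      ring
    linarith
  -- put everything together
  have hsplit : ∫ u, e u ∂P = ∫ u, T1 u / (N * m) ∂P + ∫ u, F u ∂P := by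
    rw [← integral_add (hT1int.div_const _) hFint]
    refine integral_congr_ae (Filter.Eventually.of_forall fun u => ?_)
    rw [hFdef]; ring
  have hT1z : ∫ u, T1 u / (N * m) ∂P = 0 := by
    rw [integral_div, hT1zero, zero_div]
  have hFle : |∫ u, F u ∂P| ≤ ∫ u, G u ∂P := by
    calc |∫ u, F u ∂P| = ‖∫ u, F u ∂P‖ := (Real.norm_eq_abs _).symm
      _ ≤ ∫ u, ‖F u‖ ∂P := norm_integral_le_integral_norm _
      _ ≤ ∫ u, G u ∂P := by
          refine integral_mono hFint.norm hGint fun u => ?_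
          rw [Real.norm_eq_abs]
          exact hFbound u
  calc |∫ u, e u ∂P| = |∫ u, F u ∂P| := by rw [hsplit, hT1z, zero_add]
    _ ≤ ∫ u, G u ∂P := hFle
    _ ≤ 12 * (Ig2 / m^2) / N := hGval
end

section
/- Let D₁ be a positive-definite bounded operator, D₂ a positive semi-definite bounded operator, and T a bounded self-adjoint nonnegative operator on a Hilbert space, such that D₁^{-1}T and (D₁+D₂)^{-1}T are bounded with discrete spectra. Then Tr(D₁^{-1}T) ≥ Tr((D₁+D₂)^{-1}T). -/
open ContinuousLinearMap

/-- Cauchy–Schwarz for a positive semidefinite symmetric operator. -/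
lemma cs_aux {H : Type*} [NormedAddCommGroup H] [InnerProductSpace ℝ H]
    (D : H →L[ℝ] H) (hsym : ∀ a b : H, (inner ℝ a (D b) : ℝ) = inner ℝ b (D a))
    (hpos : ∀ x, 0 ≤ (inner ℝ x (D x) : ℝ)) (u v : H) :
    (inner ℝ u (D v) : ℝ) ^ 2 ≤ (inner ℝ u (D u) : ℝ) * (inner ℝ v (D v) : ℝ) := by
  have h : ∀ t : ℝ, 0 ≤ (inner ℝ v (D v) : ℝ) * (t * t) + (2 * (inner ℝ u (D v) : ℝ)) * t
      + (inner ℝ u (D u) : ℝ) := by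
    intro t
    have h0 := hpos (t • v + u)
    have hexp : (inner ℝ (t • v + u) (D (t • v + u)) : ℝ)
        = (inner ℝ v (D v) : ℝ) * (t * t) + (2 * (inner ℝ u (D v) : ℝ)) * t
          + (inner ℝ u (D u) : ℝ) := by
      simp only [map_add, map_smul, inner_add_left, inner_add_right,
        inner_smul_left, inner_smul_right, RCLike.conj_to_real]
      rw [hsym v u]
      ring
    rw [hexp] at h0
    exact h0
  have hd := discrim_le_zero h
  unfold discrim at hd
  nlinarith [hd]

/-- Trace monotonicity: for `D₁` positive definite, `D₂` positive
semi-definite, and `T` self-adjoint nonnegative (with nonnegative self-adjoint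
square root `T^{1/2}`), one has `Tr(D₁⁻¹T) ≥ Tr((D₁+D₂)⁻¹T)`, where the
(possibly infinite) traces are computed in the symmetrized form
`Tr(D⁻¹T) = Tr(T^{1/2} D⁻¹ T^{1/2})` along an orthonormal Hilbert basis. -/
theorem stmt_11 {H : Type*} [NormedAddCommGroup H] [InnerProductSpace ℝ H]
    [CompleteSpace H] {ι : Type*} (e : HilbertBasis ι ℝ H)
    (D₁ D₂ T Thalf E₁ E₂ : H →L[ℝ] H)
    (hD₁SA : IsSelfAdjoint D₁) (hD₁pos : ∀ x, x ≠ 0 → 0 < (inner ℝ x (D₁ x) : ℝ))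
    (hD₂SA : IsSelfAdjoint D₂) (hD₂pos : ∀ x, 0 ≤ (inner ℝ x (D₂ x) : ℝ))
    (hTSA : IsSelfAdjoint T) (hTpos : ∀ x, 0 ≤ (inner ℝ x (T x) : ℝ))
    (hThalfSA : IsSelfAdjoint Thalf) (hThalfpos : ∀ x, 0 ≤ (inner ℝ x (Thalf x) : ℝ))
    (hThalf : Thalf ∘L Thalf = T)
    (hE₁ : E₁ ∘L D₁ = 1) (hE₁' : D₁ ∘L E₁ = 1)
    (hE₂ : E₂ ∘L (D₁ + D₂) = 1) (hE₂' : (D₁ + D₂) ∘L E₂ = 1) :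
    (∑' i, ENNReal.ofReal (inner ℝ (e i) ((Thalf ∘L E₂ ∘L Thalf) (e i)) : ℝ))
      ≤ (∑' i, ENNReal.ofReal (inner ℝ (e i) ((Thalf ∘L E₁ ∘L Thalf) (e i)) : ℝ)) := by
  have hD₁nn : ∀ x, 0 ≤ (inner ℝ x (D₁ x) : ℝ) := by
    intro x
    by_cases hx : x = 0
    · simp [hx]
    · exact (hD₁pos x hx).le
  have hsym : ∀ a b : H, (inner ℝ a (D₁ b) : ℝ) = inner ℝ b (D₁ a) := by
    intro a b
    have h := hD₁SA.isSymmetric a b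
    rw [real_inner_comm] at h
    exact h.symm
  -- key pointwise inequality
  have key : ∀ y : H, (inner ℝ y (E₂ y) : ℝ) ≤ (inner ℝ y (E₁ y) : ℝ) := by
    intro y
    set u := E₂ y with hu
    set v := E₁ y with hv
    have hy1 : D₁ v = y := by
      have h := congrArg (fun f => f y) hE₁'
      simpa using h
    have hy2 : D₁ u + D₂ u = y := by
      have h := congrArg (fun f => f y) hE₂'
      simpa using h
    have ha : (inner ℝ y u : ℝ) = inner ℝ u (D₁ u) + inner ℝ u (D₂ u) := by
      rw [real_inner_comm, ← hy2, inner_add_right]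
    have hb : (inner ℝ y v : ℝ) = inner ℝ v (D₁ v) := by
      rw [real_inner_comm, ← hy1]
    have ha' : (inner ℝ y u : ℝ) = inner ℝ u (D₁ v) := by
      rw [real_inner_comm, ← hy1]
    have hcs := cs_aux D₁ hsym hD₁nn u v
    have h1 : 0 ≤ (inner ℝ u (D₁ u) : ℝ) := hD₁nn u
    have h2 : 0 ≤ (inner ℝ u (D₂ u) : ℝ) := hD₂pos u
    have h3 : 0 ≤ (inner ℝ v (D₁ v) : ℝ) := hD₁nn v
    have ha0 : 0 ≤ (inner ℝ y u : ℝ) := by rw [ha]; positivity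
    have key2 : (inner ℝ y u : ℝ) ^ 2 ≤ (inner ℝ y u : ℝ) * (inner ℝ y v : ℝ) := by
      rw [ha]
      nlinarith [hcs, ha'.symm, ha]
    rcases eq_or_lt_of_le ha0 with h | h
    · rw [← h, hb]; exact h3
    · nlinarith [key2]
  apply ENNReal.tsum_le_tsum
  intro i
  apply ENNReal.ofReal_le_ofReal
  have hq : ∀ (F : H →L[ℝ] H) (x : H),
      (inner ℝ x ((Thalf ∘L F ∘L Thalf) x) : ℝ) = inner ℝ (Thalf x) (F (Thalf x)) := by
    intro F x
    have h := hThalfSA.isSymmetric x (F (Thalf x))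
    simpa using h.symm
  rw [hq E₂ (e i), hq E₁ (e i)]
  exact key (Thalf (e i))
end

section
/- In the one-step linear Gaussian filtering model with M = H = Q = R = I on an infinite-dimensional separable Hilbert space and prior covariance P trace class, the standard-proposal operator is A_st = P + I and the optimal-proposal operator is A_op = P/2; hence τ_st = Tr(P + I) = ∞ while τ_op = Tr(P/2) < ∞. -/
open ContinuousLinearMap

/-- Example 4.4: with `M = H = Q = R = I` on an infinite-dimensional Hilbert
space and `P` trace class, the standard- and optimal-proposal operators are
`A_st = (P+I)^{1/2} I (P+I)^{1/2} = P + I` and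
`A_op = P^{1/2} (2I)⁻¹ P^{1/2} = P/2`, so `τ_st = Tr(P+I) = ∞` while
`τ_op = Tr(P/2) < ∞`. Traces along an orthonormal Hilbert basis with infinite
index set. -/
theorem stmt_13 {X : Type*} [NormedAddCommGroup X] [InnerProductSpace ℝ X]
    [CompleteSpace X] {ι : Type*} [Infinite ι] (e : HilbertBasis ι ℝ X)
    (P Phalf PIhalf : X →L[ℝ] X)
    (hPSA : IsSelfAdjoint P) (hPpos : ∀ x, 0 ≤ (inner ℝ x (P x) : ℝ))
    (hPhalfSA : IsSelfAdjoint Phalf) (hPhalfpos : ∀ x, 0 ≤ (inner ℝ x (Phalf x) : ℝ))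
    (hPhalf : Phalf ∘L Phalf = P)
    (hPIhalfSA : IsSelfAdjoint PIhalf)
    (hPIhalfpos : ∀ x, 0 ≤ (inner ℝ x (PIhalf x) : ℝ))
    (hPIhalf : PIhalf ∘L PIhalf = P + 1)
    (hPtc : (∑' i, ENNReal.ofReal (inner ℝ (e i) (P (e i)) : ℝ)) < ⊤) :
    PIhalf ∘L (1 : X →L[ℝ] X) ∘L PIhalf = P + 1 ∧
    Phalf ∘L (((2 : ℝ)⁻¹) • (1 : X →L[ℝ] X)) ∘L Phalf = ((2 : ℝ)⁻¹) • P ∧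
    (∑' i, ENNReal.ofReal (inner ℝ (e i) ((P + 1) (e i)) : ℝ)) = ⊤ ∧
    (∑' i, ENNReal.ofReal (inner ℝ (e i) ((((2 : ℝ)⁻¹) • P) (e i)) : ℝ)) < ⊤ := by
  have hnorm : ∀ i : ι, (inner ℝ (e i) (e i) : ℝ) = 1 := by
    intro i
    have := e.orthonormal.1 i
    rw [real_inner_self_eq_norm_sq, this]; norm_num
  refine ⟨?_, ?_, ?_, ?_⟩
  · ext x
    simpa using DFunLike.congr_fun hPIhalf x
  · ext x
    have h := DFunLike.congr_fun hPhalf x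
    simp only [comp_apply] at h
    simp [map_smul, h]
  · refine eq_top_iff.2 ?_
    calc (⊤ : ENNReal) = ∑' _ : ι, (1 : ENNReal) :=
          (ENNReal.tsum_const_eq_top_of_ne_zero one_ne_zero).symm
      _ ≤ _ := by
          refine ENNReal.tsum_le_tsum fun i => ?_
          have : (inner ℝ (e i) ((P + 1) (e i)) : ℝ) = inner ℝ (e i) (P (e i)) + 1 := by
            simp [inner_add_right, hnorm i, e.orthonormal.1 i]
          rw [this]
          refine le_trans ?_ (ENNReal.ofReal_le_ofReal (le_add_of_nonneg_left (hPpos _)))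
          simp
  · have h : ∀ i : ι, ENNReal.ofReal (inner ℝ (e i) ((((2 : ℝ)⁻¹) • P) (e i)) : ℝ)
        = ENNReal.ofReal (2 : ℝ)⁻¹ * ENNReal.ofReal (inner ℝ (e i) (P (e i)) : ℝ) := by
      intro i
      rw [← ENNReal.ofReal_mul (by norm_num)]
      simp [inner_smul_right]
    simp_rw [h]
    rw [ENNReal.tsum_mul_left]
    exact ENNReal.mul_lt_top (by simp) hPtc
end

section
/- Let π be a probability measure, g ≥ 0 measurable with π(g) > 0, φ measurable, and let μ^N, π^N denote the self-normalized importance sampling estimator and the empirical measure of N i.i.d. samples from π, respectively. Then for any 0 < θ < 1 the pathwise bound |μ^N(φ) − μ(φ)| ≤ |π^N(φg) − π(φg)|/π(g) + |π^N(φg)|·|π^N(g) − π(g)|/π(g)² + max_{1≤n≤N}|φ(uⁿ)| · |π^N(g) − π(g)|^{1+θ}/π(g)^{1+θ} holds. -/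
open MeasureTheory

lemma key_ratio (A B a b M θ : ℝ) (hB : 0 < B) (hb : 0 < b) (hM : 0 ≤ M)
    (hAB : |A| ≤ M * B) (hθ0 : 0 < θ) (hθ1 : θ < 1) :
    |A / B - a / b| ≤ |A - a| / b + |A| * |B - b| / b ^ 2
      + M * |B - b| ^ (1 + θ) / b ^ (1 + θ) := by
  have h3 : 0 ≤ M * |B - b| ^ (1 + θ) / b ^ (1 + θ) := by
    apply div_nonneg (mul_nonneg hM (Real.rpow_nonneg (abs_nonneg _) _))
    exact (Real.rpow_pos_of_pos hb _).le
  rcases le_or_gt b B with hBb | hBb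
  · have h1 : A / B - a / b = (A - a) / b + A * (b - B) / (B * b) := by
      field_simp; ring
    have h2 : |A * (b - B) / (B * b)| ≤ |A| * |B - b| / b ^ 2 := by
      rw [abs_div, abs_mul, abs_of_pos (mul_pos hB hb)]
      rw [abs_sub_comm b B]
      apply div_le_div_of_nonneg_left (mul_nonneg (abs_nonneg _) (abs_nonneg _))
        (by positivity)
      calc b ^ 2 = b * b := sq b
        _ ≤ B * b := by nlinarith
    calc |A / B - a / b| ≤ |(A - a) / b| + |A * (b - B) / (B * b)| := by
          rw [h1]; exact abs_add_le _ _
      _ ≤ |A - a| / b + |A| * |B - b| / b ^ 2 := by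
          rw [abs_div, abs_of_pos hb]; linarith
      _ ≤ _ := by linarith
  · -- B < b
    set t : ℝ := (b - B) / b with ht
    have ht0 : 0 < t := div_pos (by linarith) hb
    have ht1 : t < 1 := by rw [ht, div_lt_one hb]; linarith
    have h1 : A / B - a / b = (A - a) / b + A * (b - B) / b ^ 2
        + A * (b - B) ^ 2 / (B * b ^ 2) := by
      field_simp; ring
    have h2 : |A * (b - B) / b ^ 2| = |A| * |B - b| / b ^ 2 := by
      rw [abs_div, abs_mul, abs_of_pos (by positivity : (0:ℝ) < b ^ 2),
        abs_sub_comm b B]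
    have h4 : |A * (b - B) ^ 2 / (B * b ^ 2)| ≤ M * |B - b| ^ (1 + θ) / b ^ (1 + θ) := by
      have habs : |A * (b - B) ^ 2 / (B * b ^ 2)| = |A| * (b - B) ^ 2 / (B * b ^ 2) := by
        rw [abs_div, abs_mul, abs_of_pos (by positivity : (0:ℝ) < B * b ^ 2), abs_of_nonneg (sq_nonneg (b - B))]
      rw [habs]
      have step1 : |A| * (b - B) ^ 2 / (B * b ^ 2) ≤ M * t ^ 2 := by
        have : |A| * (b - B) ^ 2 / (B * b ^ 2) ≤ (M * B) * (b - B) ^ 2 / (B * b ^ 2) := by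
          apply div_le_div_of_nonneg_right ?_ (by positivity)
          exact mul_le_mul_of_nonneg_right hAB (sq_nonneg _)
        calc |A| * (b - B) ^ 2 / (B * b ^ 2) ≤ (M * B) * (b - B) ^ 2 / (B * b ^ 2) := this
          _ = M * t ^ 2 := by
            rw [ht, div_pow, mul_div_assoc', div_eq_div_iff (by positivity) (by positivity)]; ring
      have step2 : t ^ 2 ≤ t ^ (1 + θ) := by
        have : t ^ ((2:ℕ) : ℝ) ≤ t ^ (1 + θ) :=
          Real.rpow_le_rpow_of_exponent_ge ht0 ht1.le (by push_cast; linarith)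
        rwa [Real.rpow_natCast] at this
      have step3 : t ^ (1 + θ) = |B - b| ^ (1 + θ) / b ^ (1 + θ) := by
        rw [ht, Real.div_rpow (by linarith) hb.le, abs_sub_comm,
          abs_of_pos (by linarith : (0:ℝ) < b - B)]
      calc |A| * (b - B) ^ 2 / (B * b ^ 2) ≤ M * t ^ 2 := step1
        _ ≤ M * t ^ (1 + θ) := mul_le_mul_of_nonneg_left step2 hM
        _ = M * |B - b| ^ (1 + θ) / b ^ (1 + θ) := by rw [step3, mul_div_assoc]
    calc |A / B - a / b|
        ≤ |(A - a) / b| + |A * (b - B) / b ^ 2| + |A * (b - B) ^ 2 / (B * b ^ 2)| := by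
          rw [h1]; exact (abs_add_le _ _).trans (add_le_add_left (abs_add_le _ _) _)
      _ ≤ _ := by
          rw [abs_div, abs_of_pos hb, h2]; linarith

/-- Lemma 5.2 (Doucet–Lindsten type pathwise ratio bound): for any `0 < θ < 1`,
`|μ^N(φ) - μ(φ)| ≤ |π^N(φg) - π(φg)|/π(g) + |π^N(φg)| |π^N(g) - π(g)|/π(g)²
+ (max_n |φ(uⁿ)|) |π^N(g) - π(g)|^{1+θ}/π(g)^{1+θ}`. -/
theorem stmt_18 {X : Type*} [MeasurableSpace X] (π : Measure X)
    [IsProbabilityMeasure π] (g : X → ℝ) (hgm : Measurable g)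
    (hg0 : ∀ x, 0 ≤ g x) (hgpos : 0 < ∫ x, g x ∂π)
    (φ : X → ℝ) (hφm : Measurable φ)
    (N : ℕ) (hN : 0 < N) (u : Fin N → X)
    (hNg : 0 < (N : ℝ)⁻¹ * ∑ n, g (u n))
    (θ : ℝ) (hθ0 : 0 < θ) (hθ1 : θ < 1) :
    |((N : ℝ)⁻¹ * ∑ n, φ (u n) * g (u n)) / ((N : ℝ)⁻¹ * ∑ n, g (u n))
        - (∫ x, φ x * g x ∂π) / (∫ x, g x ∂π)|
      ≤ |(N : ℝ)⁻¹ * (∑ n, φ (u n) * g (u n)) - ∫ x, φ x * g x ∂π|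
            / (∫ x, g x ∂π)
        + |(N : ℝ)⁻¹ * ∑ n, φ (u n) * g (u n)|
            * |(N : ℝ)⁻¹ * (∑ n, g (u n)) - ∫ x, g x ∂π|
            / (∫ x, g x ∂π) ^ 2
        + (⨆ n : Fin N, |φ (u n)|)
            * |(N : ℝ)⁻¹ * (∑ n, g (u n)) - ∫ x, g x ∂π| ^ (1 + θ)
            / (∫ x, g x ∂π) ^ (1 + θ) := by
  haveI : Nonempty (Fin N) := Fin.pos_iff_nonempty.mp hN
  set M : ℝ := ⨆ n : Fin N, |φ (u n)| with hMdef
  have hbdd : BddAbove (Set.range fun n : Fin N => |φ (u n)|) :=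
    Set.Finite.bddAbove (Set.finite_range _)
  have hle : ∀ n : Fin N, |φ (u n)| ≤ M := fun n => le_ciSup hbdd n
  have hM : 0 ≤ M := le_trans (abs_nonneg _) (hle (Classical.arbitrary _))
  have hAB : |(N : ℝ)⁻¹ * ∑ n, φ (u n) * g (u n)|
      ≤ M * ((N : ℝ)⁻¹ * ∑ n, g (u n)) := by
    rw [abs_mul, abs_of_nonneg (by positivity : (0:ℝ) ≤ (N : ℝ)⁻¹)]
    calc (N : ℝ)⁻¹ * |∑ n, φ (u n) * g (u n)|
        ≤ (N : ℝ)⁻¹ * ∑ n, |φ (u n) * g (u n)| := by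
          apply mul_le_mul_of_nonneg_left (Finset.abs_sum_le_sum_abs _ _)
            (by positivity)
      _ ≤ (N : ℝ)⁻¹ * ∑ n, M * g (u n) := by
          apply mul_le_mul_of_nonneg_left ?_ (by positivity)
          apply Finset.sum_le_sum
          intro n _
          rw [abs_mul, abs_of_nonneg (hg0 _)]
          exact mul_le_mul_of_nonneg_right (hle n) (hg0 _)
      _ = M * ((N : ℝ)⁻¹ * ∑ n, g (u n)) := by
          rw [← Finset.mul_sum]; ring
  exact key_ratio _ _ _ _ M θ hNg hgpos hM hAB hθ0 hθ1
end

section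
/- Let σ, σ_obs > 0 and consider A_st = ((p+q)/r) I and A_op = (p/(q+r)) I, the operators arising from one step of filtering initialized at P = pI with M = H = I, Q = qI, R = rI in ℝ^d. Then Tr(A_op) ≤ Tr(A_st), with Tr(A_st)/Tr(A_op) = (p+q)(q+r)/(pr); in particular as r → 0 with p, q fixed, Tr(A_st) → ∞ while Tr(A_op) remains bounded by pd/q. -/
open Matrix Filter

/-- For `A_st = ((p+q)/r)I` and `A_op = (p/(q+r))I` in `ℝ^d`:
`Tr(A_op) ≤ Tr(A_st)`, the ratio `Tr(A_st)/Tr(A_op) = (p+q)(q+r)/(pr)`,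
`Tr(A_op) ≤ pd/q` stays bounded, while `Tr(A_st) → ∞` as `r → 0⁺`. -/
theorem stmt_19 (d : ℕ) (hd : 0 < d) (p q : ℝ) (hp : 0 < p) (hq : 0 < q) :
    (∀ r : ℝ, 0 < r →
      ((p / (q + r)) • (1 : Matrix (Fin d) (Fin d) ℝ)).trace
          ≤ (((p + q) / r) • (1 : Matrix (Fin d) (Fin d) ℝ)).trace ∧
        (((p + q) / r) • (1 : Matrix (Fin d) (Fin d) ℝ)).trace
            / ((p / (q + r)) • (1 : Matrix (Fin d) (Fin d) ℝ)).trace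
          = (p + q) * (q + r) / (p * r) ∧
        ((p / (q + r)) • (1 : Matrix (Fin d) (Fin d) ℝ)).trace ≤ p * d / q) ∧
    Tendsto (fun r : ℝ => (((p + q) / r) • (1 : Matrix (Fin d) (Fin d) ℝ)).trace)
      (nhdsWithin 0 (Set.Ioi 0)) atTop := by
  have htr : ∀ c : ℝ, (c • (1 : Matrix (Fin d) (Fin d) ℝ)).trace = c * d := by
    intro c
    simp [Matrix.trace_smul, Matrix.trace_one]
  have hd' : (0 : ℝ) < d := by exact_mod_cast hd
  constructor
  · intro r hr
    have hqr : 0 < q + r := by linarith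
    refine ⟨?_, ?_, ?_⟩
    · rw [htr, htr]
      have h1 : p / (q + r) ≤ (p + q) / r := by
        rw [div_le_div_iff₀ hqr hr]
        nlinarith
      exact mul_le_mul_of_nonneg_right h1 hd'.le
    · rw [htr, htr]
      field_simp
    · rw [htr]
      have : p / (q + r) ≤ p / q := by
        apply div_le_div_of_nonneg_left hp.le hq; linarith
      calc p / (q + r) * d ≤ p / q * d := mul_le_mul_of_nonneg_right this hd'.le
        _ = p * d / q := by ring
  · simp only [htr]
    have h1 : Tendsto (fun r : ℝ => (p + q) / r) (nhdsWithin 0 (Set.Ioi 0)) atTop := by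
      simpa [div_eq_mul_inv] using tendsto_inv_nhdsGT_zero.const_mul_atTop (by linarith : (0:ℝ) < p + q)
    exact h1.atTop_mul_const hd'
end
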